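/- Let d ≥ 2, α ∈ [1,∞), β = 1 + 1/α, and δ = β/d. There exists C > 0 depending only on d and α such that for every R ∈ (0, 1/9], setting λ' = R |ln R|^β, one has ∫_{R ≤ |z| ≤ |ln R|^{−δ}} (R |z|^{−d} / λ') · (ln(R |z|^{−d} / λ'))^{1/α} dz ≤ C, where the integral is taken over z ∈ ℝ^d with R ≤ |z| ≤ |ln R|^{−δ} (on which region R|z|^{−d}/λ' ≥ 1, so the logarithm is nonnegative). -/

import Mathlib

open Set MeasureTheory Measure Metric
open scoped ENNReal

lemma lintegral_fun_norm_addHaar' {E : Type*} [NormedAddCommGroup E] [NormedSpace ℝ E]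
    [MeasurableSpace E] [BorelSpace E] [FiniteDimensional ℝ E] [Nontrivial E]
    (μ : Measure E) [μ.IsAddHaarMeasure] {g : ℝ → ℝ≥0∞} (hg : Measurable g) :
    ∫⁻ x, g ‖x‖ ∂μ = μ.toSphere univ *
      ∫⁻ r in Ioi (0:ℝ), ENNReal.ofReal (r ^ (Module.finrank ℝ E - 1)) * g r := by
  have h1 : ∫⁻ x, g ‖x‖ ∂μ = ∫⁻ x : ({(0:E)}ᶜ : Set E), g ‖(x:E)‖ ∂(μ.comap (↑)) := by
    rw [lintegral_subtype_comap (measurableSet_singleton (0:E)).compl (fun a => g ‖a‖),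
      restrict_compl_singleton]
  have h2 : ∫⁻ x : ({(0:E)}ᶜ : Set E), g ‖(x:E)‖ ∂(μ.comap (↑)) =
      ∫⁻ p : sphere (0:E) 1 × Ioi (0:ℝ), g p.2
        ∂(μ.toSphere.prod (volumeIoiPow (Module.finrank ℝ E - 1))) := by
    have := μ.measurePreserving_homeomorphUnitSphereProd.lintegral_comp_emb
      (Homeomorph.measurableEmbedding _) (g ∘ Subtype.val ∘ Prod.snd)
    simpa using this
  have h3 : ∫⁻ p : sphere (0:E) 1 × Ioi (0:ℝ), g p.2
        ∂(μ.toSphere.prod (volumeIoiPow (Module.finrank ℝ E - 1))) =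
      μ.toSphere univ * ∫⁻ r : Ioi (0:ℝ), g r ∂(volumeIoiPow (Module.finrank ℝ E - 1)) := by
    have := lintegral_prod_mul (μ := μ.toSphere) (ν := volumeIoiPow (Module.finrank ℝ E - 1))
      (f := fun _ => (1:ℝ≥0∞)) (g := fun r : Ioi (0:ℝ) => g r)
      aemeasurable_const ((hg.comp measurable_subtype_coe).aemeasurable)
    simpa using this
  have h4 : ∫⁻ r : Ioi (0:ℝ), g r ∂(volumeIoiPow (Module.finrank ℝ E - 1)) =
      ∫⁻ r in Ioi (0:ℝ), ENNReal.ofReal (r ^ (Module.finrank ℝ E - 1)) * g r := by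
    rw [volumeIoiPow, lintegral_withDensity_eq_lintegral_mul _
      ((measurable_subtype_coe.pow_const _).ennreal_ofReal)
      (show Measurable fun r : Ioi (0:ℝ) => g ↑r from hg.comp measurable_subtype_coe),
      ← lintegral_subtype_comap measurableSet_Ioi
        (fun r : ℝ => ENNReal.ofReal (r ^ (Module.finrank ℝ E - 1)) * g r)]
    rfl
  rw [h1, h2, h3, h4]

theorem stmt3 (d : ℕ) (hd : 2 ≤ d) (α : ℝ) (hα : 1 ≤ α)
    (β δ : ℝ) (hβ : β = 1 + 1 / α) (hδ : δ = β / d) :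
    ∃ C : ℝ, 0 < C ∧
      ∀ R : ℝ, 0 < R → R ≤ 1 / 9 →
        ∫⁻ z in {z : EuclideanSpace ℝ (Fin d) | R ≤ ‖z‖ ∧ ‖z‖ ≤ |Real.log R| ^ (-δ)},
            ENNReal.ofReal
              ((R * ‖z‖ ^ (-(d : ℝ)) / (R * |Real.log R| ^ β)) *
                Real.log (R * ‖z‖ ^ (-(d : ℝ)) / (R * |Real.log R| ^ β)) ^ (1 / α))
          ≤ ENNReal.ofReal C := by
  have hα0 : 0 < α := by linarith
  have hαinv : 0 < 1 / α := by positivity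
  have hαinv1 : 1 / α ≤ 1 := by rw [div_le_one hα0]; exact hα
  have hβ1 : 1 < β := by rw [hβ]; linarith
  have hβ2 : β ≤ 2 := by rw [hβ]; linarith
  have hd0 : (0:ℝ) < d := by
    have : 0 < d := by omega
    exact_mod_cast this
  have hd2 : (2:ℝ) ≤ d := by exact_mod_cast hd
  have hδ0 : 0 < δ := by rw [hδ]; positivity
  have hδ1 : δ ≤ 1 := by rw [hδ, div_le_one hd0]; linarith
  have hδd : δ * d = β := by rw [hδ]; field_simp
  haveI : Nonempty (Fin d) := ⟨⟨0, by omega⟩⟩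
  haveI : Nontrivial (EuclideanSpace ℝ (Fin d)) := inferInstance
  set S := (volume : Measure (EuclideanSpace ℝ (Fin d))).toSphere univ with hSdef
  have hStop : S ≠ ⊤ := measure_ne_top _ _
  refine ⟨S.toReal * d + 1, by positivity, ?_⟩
  intro R hR0 hR9
  have hlogR : Real.log R < 0 := Real.log_neg hR0 (by linarith)
  set L : ℝ := |Real.log R| with hLdef
  have hLeq : L = -Real.log R := abs_of_neg hlogR
  have hL1 : 1 < L := by
    have h9 : Real.log 9 ≤ Real.log (1/R) := by
      apply Real.log_le_log (by norm_num)
      rw [le_one_div (by norm_num) hR0]; exact hR9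
    have he : Real.exp 1 < 9 := by
      have := Real.exp_one_lt_d9; linarith
    have h1 : (1:ℝ) < Real.log 9 := by
      rw [show (1:ℝ) = Real.log (Real.exp 1) from (Real.log_exp 1).symm]
      exact Real.log_lt_log (Real.exp_pos 1) he
    rw [hLeq, ← Real.log_inv, ← one_div]
    linarith
  have hL0 : 0 < L := lt_trans one_pos hL1
  set ρ : ℝ := L ^ (-δ) with hρdef
  have hρpos : 0 < ρ := Real.rpow_pos_of_pos hL0 _
  have hρ1 : ρ ≤ 1 := Real.rpow_le_one_of_one_le_of_nonpos hL1.le (by linarith)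
  have hRρ : R ≤ ρ := by
    have h1 : L ≤ 1 / R := by
      rw [hLeq, ← Real.log_inv, ← one_div]
      have := Real.log_le_sub_one_of_pos (show (0:ℝ) < 1/R by positivity)
      linarith
    have h2 : L ^ (-(1:ℝ)) ≤ ρ := by
      rw [hρdef]
      exact Real.rpow_le_rpow_of_exponent_le hL1.le (by linarith)
    have h1' : R * L ≤ 1 := by
      have := mul_le_mul_of_nonneg_left h1 hR0.le
      rwa [mul_one_div, div_self (ne_of_gt hR0)] at this
    have h3 : R ≤ L ^ (-(1:ℝ)) := by
      rw [Real.rpow_neg_one, inv_eq_one_div, le_div_iff₀ hL0]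
      exact h1'
    linarith
  set c : ℝ := R * L ^ β with hcdef
  have hLβ0 : 0 < L ^ β := Real.rpow_pos_of_pos hL0 _
  have hLβ1 : 1 ≤ L ^ β := Real.one_le_rpow hL1.le (by linarith)
  have hc0 : 0 < c := by positivity
  set φ : ℝ → ℝ := fun r => (R * r ^ (-(d:ℝ)) / c) *
      Real.log (R * r ^ (-(d:ℝ)) / c) ^ (1/α) with hφdef
  have hφmeas : Measurable fun r : ℝ => ENNReal.ofReal (φ r) := by
    have h1 : Measurable fun r : ℝ => R * r ^ (-(d:ℝ)) / c := by fun_prop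
    have h2 : Measurable fun x : ℝ => x ^ (1/α) := by fun_prop
    exact (h1.mul (h2.comp h1.log)).ennreal_ofReal
  set g : ℝ → ℝ≥0∞ := (Icc R ρ).indicator (fun r => ENNReal.ofReal (φ r)) with hgdef
  have hgmeas : Measurable g := hφmeas.indicator measurableSet_Icc
  have hsetmeas : MeasurableSet {z : EuclideanSpace ℝ (Fin d) | R ≤ ‖z‖ ∧ ‖z‖ ≤ ρ} :=
    measurable_norm measurableSet_Icc
  have key : (∫⁻ z in {z : EuclideanSpace ℝ (Fin d) | R ≤ ‖z‖ ∧ ‖z‖ ≤ ρ},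
      ENNReal.ofReal (φ ‖z‖)) = ∫⁻ z : EuclideanSpace ℝ (Fin d), g ‖z‖ := by
    rw [← lintegral_indicator hsetmeas]
    refine lintegral_congr fun z => ?_
    simp only [hgdef, Set.indicator_apply, Set.mem_Icc, Set.mem_setOf_eq]
  have polar := lintegral_fun_norm_addHaar' (volume : Measure (EuclideanSpace ℝ (Fin d))) hgmeas
  rw [finrank_euclideanSpace_fin] at polar
  have h1d : (∫⁻ r in Ioi (0:ℝ), ENNReal.ofReal (r ^ (d - 1)) * g r) =
      ∫⁻ r in Icc R ρ, ENNReal.ofReal (r ^ (d-1)) * ENNReal.ofReal (φ r) := by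
    have hfun : (fun r : ℝ => ENNReal.ofReal (r ^ (d-1)) * g r) =
        (Icc R ρ).indicator (fun r => ENNReal.ofReal (r ^ (d-1)) * ENNReal.ofReal (φ r)) := by
      funext r
      by_cases hr : r ∈ Icc R ρ
      · rw [hgdef, indicator_of_mem hr, indicator_of_mem hr]
      · rw [hgdef, indicator_of_notMem hr, indicator_of_notMem hr, mul_zero]
    rw [hfun, lintegral_indicator measurableSet_Icc, Measure.restrict_restrict measurableSet_Icc,
      show Icc R ρ ∩ Ioi (0:ℝ) = Icc R ρ from
        inter_eq_left.mpr fun x (hx : x ∈ Icc R ρ) => lt_of_lt_of_le hR0 hx.1]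
  set K : ℝ := (d:ℝ) ^ (1/α) / L with hKdef
  have hK0 : 0 ≤ K := by positivity
  have hpt : ∀ r ∈ Icc R ρ, ENNReal.ofReal (r ^ (d-1)) * ENNReal.ofReal (φ r) ≤
      ENNReal.ofReal (K * r⁻¹) := by
    intro r hr
    obtain ⟨hr1, hr2⟩ := hr
    have hr0 : 0 < r := lt_of_lt_of_le hR0 hr1
    rw [← ENNReal.ofReal_mul (by positivity)]
    apply ENNReal.ofReal_le_ofReal
    have hxrw : R * r ^ (-(d:ℝ)) / c = r ^ (-(d:ℝ)) / L ^ β := by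
      rw [hcdef, mul_div_mul_left _ _ (ne_of_gt hR0)]
    set x : ℝ := r ^ (-(d:ℝ)) / L ^ β with hxdef
    have hx0 : 0 < x := by positivity
    have hρd : ρ ^ (-(d:ℝ)) = L ^ β := by
      rw [hρdef, ← Real.rpow_mul hL0.le, neg_mul_neg, hδd]
    have hx1 : 1 ≤ x := by
      rw [hxdef, le_div_iff₀ hLβ0, one_mul, ← hρd]
      exact Real.rpow_le_rpow_of_nonpos hr0 hr2 (by linarith)
    have hlog0 : 0 ≤ Real.log x := Real.log_nonneg hx1
    have hxle : x ≤ R ^ (-(d:ℝ)) := by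
      have h1 : r ^ (-(d:ℝ)) ≤ R ^ (-(d:ℝ)) :=
        Real.rpow_le_rpow_of_nonpos hR0 hr1 (by linarith)
      calc x ≤ r ^ (-(d:ℝ)) := by
              rw [hxdef]; exact div_le_self (by positivity) hLβ1
        _ ≤ _ := h1
    have hlogle : Real.log x ≤ d * L := by
      have h2 := Real.log_le_log hx0 hxle
      rw [Real.log_rpow hR0] at h2
      rw [hLeq]; linarith
    have hpow : Real.log x ^ (1/α) ≤ (d:ℝ)^(1/α) * L^(1/α) := by
      have h1 : Real.log x ^ (1/α) ≤ ((d:ℝ) * L) ^ (1/α) :=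
        Real.rpow_le_rpow hlog0 hlogle (le_of_lt hαinv)
      rwa [Real.mul_rpow (by positivity) hL0.le] at h1
    have hφr : φ r = x * Real.log x ^ (1/α) := by
      rw [hφdef]; simp only; rw [hxrw]
    have hnat : (r:ℝ) ^ (d-1) = r ^ ((d:ℝ) - 1) := by
      rw [← Real.rpow_natCast r (d-1), Nat.cast_sub (by omega), Nat.cast_one]
    calc r ^ (d-1) * φ r = r ^ ((d:ℝ)-1) * (x * Real.log x ^ (1/α)) := by
          rw [hnat, hφr]
      _ ≤ r ^ ((d:ℝ)-1) * (x * ((d:ℝ)^(1/α) * L^(1/α))) := by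
          apply mul_le_mul_of_nonneg_left _ (by positivity)
          exact mul_le_mul_of_nonneg_left hpow (le_of_lt hx0)
      _ = K * r⁻¹ := by
          rw [hKdef, hxdef]
          have e1 : r ^ ((d:ℝ)-1) * (r ^ (-(d:ℝ)) / L ^ β * ((d:ℝ)^(1/α) * L^(1/α))) =
              (d:ℝ)^(1/α) * (L^(1/α) / L^β) * (r ^ ((d:ℝ)-1) * r ^ (-(d:ℝ)))  := by
            ring
          rw [e1, ← Real.rpow_add hr0, ← Real.rpow_sub hL0]
          have e2 : (d:ℝ) - 1 + -(d:ℝ) = -1 := by ring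
          have e3 : 1/α - β = -1 := by rw [hβ]; ring
          rw [e2, e3, Real.rpow_neg_one, Real.rpow_neg_one]
          ring
  have hint : IntegrableOn (fun r : ℝ => K * r⁻¹) (Icc R ρ) := by
    apply ContinuousOn.integrableOn_compact isCompact_Icc
    apply continuousOn_const.mul
    apply continuousOn_inv₀.mono
    intro x hx
    exact ne_of_gt (lt_of_lt_of_le hR0 hx.1)
  have hbound : (∫⁻ r in Icc R ρ, ENNReal.ofReal (r ^ (d-1)) * ENNReal.ofReal (φ r)) ≤
      ENNReal.ofReal (d:ℝ) := by
    calc (∫⁻ r in Icc R ρ, ENNReal.ofReal (r ^ (d-1)) * ENNReal.ofReal (φ r)) ≤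
        ∫⁻ r in Icc R ρ, ENNReal.ofReal (K * r⁻¹) :=
          setLIntegral_mono' measurableSet_Icc hpt
      _ = ENNReal.ofReal (∫ r in Icc R ρ, K * r⁻¹) := by
          rw [← ofReal_integral_eq_lintegral_ofReal hint]
          filter_upwards [ae_restrict_mem measurableSet_Icc] with r hr
          have hr0 : 0 < r := lt_of_lt_of_le hR0 hr.1
          positivity
      _ ≤ ENNReal.ofReal (d:ℝ) := by
          apply ENNReal.ofReal_le_ofReal
          have step3 : ∫ r in Icc R ρ, K * r⁻¹ = K * Real.log (ρ / R) := by
            rw [MeasureTheory.integral_Icc_eq_integral_Ioc,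
              ← intervalIntegral.integral_of_le hRρ,
              intervalIntegral.integral_const_mul, integral_inv_of_pos hR0 hρpos]
          have hlogρR : Real.log (ρ / R) ≤ L := by
            rw [Real.log_div (ne_of_gt hρpos) (ne_of_gt hR0)]
            have h4 := Real.log_nonpos hρpos.le hρ1
            rw [hLeq]; linarith
          have h5 : K * Real.log (ρ/R) ≤ K * L := mul_le_mul_of_nonneg_left hlogρR hK0
          have h6 : K * L = (d:ℝ) ^ (1/α) := by
            rw [hKdef]; field_simp
          have h7 : (d:ℝ) ^ (1/α) ≤ (d:ℝ) := by
            calc (d:ℝ)^(1/α) ≤ (d:ℝ)^(1:ℝ) :=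
                Real.rpow_le_rpow_of_exponent_le (by linarith) hαinv1
              _ = d := Real.rpow_one _
          rw [step3]
          linarith
  have hfinal : S * ENNReal.ofReal (d:ℝ) ≤ ENNReal.ofReal (S.toReal * d + 1) := by
    have he : S * ENNReal.ofReal (d:ℝ) = ENNReal.ofReal (S.toReal * d) := by
      conv_lhs => rw [← ENNReal.ofReal_toReal hStop]
      rw [← ENNReal.ofReal_mul ENNReal.toReal_nonneg]
    rw [he]
    exact ENNReal.ofReal_le_ofReal (by linarith)
  calc (∫⁻ z in {z : EuclideanSpace ℝ (Fin d) | R ≤ ‖z‖ ∧ ‖z‖ ≤ ρ},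
      ENNReal.ofReal (φ ‖z‖)) = ∫⁻ z : EuclideanSpace ℝ (Fin d), g ‖z‖ := key
    _ = S * ∫⁻ r in Ioi (0:ℝ), ENNReal.ofReal (r ^ (d - 1)) * g r := polar
    _ = S * ∫⁻ r in Icc R ρ, ENNReal.ofReal (r ^ (d-1)) * ENNReal.ofReal (φ r) := by rw [h1d]
    _ ≤ S * ENNReal.ofReal (d:ℝ) := mul_le_mul_right hbound S
    _ ≤ ENNReal.ofReal (S.toReal * d + 1) := hfinal
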